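/- Any generalized function u ∈ G(ℝ^d) which is invariant under standard scaling is a generalized constant: if u(λx) = u(x) holds in G(ℝ^d) for every real λ > 0 (i.e. for every λ > 0 the net (u_ε(λx) − u_ε(x))_ε is negligible), then there exists a generalized number c such that u = c in G(ℝ^d). -/

import Mathlib

open Set Filter Topology MeasureTheory

noncomputable section

variable {E F : Type*} [NormedAddCommGroup E] [NormedSpace ℝ E]
  [NormedAddCommGroup F] [NormedSpace ℝ F]

/-- A net of smooth functions, indexed by `ε ∈ (0,1]`, is *moderate* on the open set `Ω`:
all iterated derivatives are `O(ε^{-N})` on compact subsets, for some `N`. -/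
def IsModerate (Ω : Set E) (u : ℝ → E → F) : Prop :=
  (∀ ε ∈ Set.Ioc (0:ℝ) 1, ContDiffOn ℝ (⊤:ℕ∞) (u ε) Ω) ∧
  ∀ K : Set E, IsCompact K → K ⊆ Ω → ∀ n : ℕ, ∃ N : ℕ, ∃ C : ℝ, ∃ ε₀ : ℝ, 0 < ε₀ ∧
    ∀ ε : ℝ, 0 < ε → ε < ε₀ → ∀ x ∈ K,
      ‖iteratedFDerivWithin ℝ n (u ε) Ω x‖ ≤ C * ε ^ (-(N:ℤ))

/-- A net of smooth functions is *negligible* on `Ω`: all iterated derivatives are `O(ε^m)`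
on compact subsets, for every `m`. -/
def IsNegligible (Ω : Set E) (u : ℝ → E → F) : Prop :=
  (∀ ε ∈ Set.Ioc (0:ℝ) 1, ContDiffOn ℝ (⊤:ℕ∞) (u ε) Ω) ∧
  ∀ K : Set E, IsCompact K → K ⊆ Ω → ∀ n : ℕ, ∀ m : ℕ, ∃ C : ℝ, ∃ ε₀ : ℝ, 0 < ε₀ ∧
    ∀ ε : ℝ, 0 < ε → ε < ε₀ → ∀ x ∈ K,
      ‖iteratedFDerivWithin ℝ n (u ε) Ω x‖ ≤ C * ε ^ m

/-- A net of numbers is *moderate*: `O(ε^{-N})` for some `N`. -/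
def NumModerate (c : ℝ → F) : Prop :=
  ∃ N : ℕ, ∃ C : ℝ, ∃ ε₀ : ℝ, 0 < ε₀ ∧ ∀ ε : ℝ, 0 < ε → ε < ε₀ → ‖c ε‖ ≤ C * ε ^ (-(N:ℤ))

/-- A net of numbers is *negligible*: `O(ε^m)` for every `m`. -/
def NumNegligible (c : ℝ → F) : Prop :=
  ∀ m : ℕ, ∃ C : ℝ, ∃ ε₀ : ℝ, 0 < ε₀ ∧ ∀ ε : ℝ, 0 < ε → ε < ε₀ → ‖c ε‖ ≤ C * ε ^ m

/-- A net of points is a representative of a *compactly supported generalized point* of `Ω`. -/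
def CompactlySupportedPoint (Ω : Set E) (a : ℝ → E) : Prop :=
  ∃ K : Set E, IsCompact K ∧ K ⊆ Ω ∧ ∃ ε₀ : ℝ, 0 < ε₀ ∧ ∀ ε : ℝ, 0 < ε → ε < ε₀ → a ε ∈ K

/-- The partial order on generalized reals, on representatives: `a ≤ b` iff `b - a` has a
representative with all terms nonnegative, i.e. `a ε + n ε ≤ b ε` for some negligible `n`. -/
def TildeLe (a b : ℝ → ℝ) : Prop :=
  ∃ n : ℝ → ℝ, NumNegligible n ∧ ∀ ε ∈ Set.Ioc (0:ℝ) 1, a ε + n ε ≤ b ε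

/-- Strict order `a << b`: `b - a` is strictly positive, i.e. `b ε - a ε > ε^m` for some `m`
and all small `ε`. -/
def TildeLt (a b : ℝ → ℝ) : Prop :=
  ∃ m : ℕ, ∃ ε₀ : ℝ, 0 < ε₀ ∧ ∀ ε : ℝ, 0 < ε → ε < ε₀ → a ε + ε ^ m < b ε

set_option maxHeartbeats 1000000 in
lemma aux_deriv_neg {E : Type*} [NormedAddCommGroup E] [NormedSpace ℝ E] [ProperSpace E]
    (u : ℝ → E → ℂ)
    (hu : IsModerate (Set.univ : Set E) u)
    (hinv : IsNegligible (Set.univ : Set E) (fun ε x => u ε ((1/2 : ℝ) • x) - u ε x))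
    (R : ℝ) (n : ℕ) (hn : 1 ≤ n) (m : ℕ) :
    ∃ C : ℝ, 0 ≤ C ∧ ∃ ε₀ : ℝ, 0 < ε₀ ∧ ε₀ ≤ 1 ∧ ∀ ε : ℝ, 0 < ε → ε < ε₀ →
      ∀ x ∈ Metric.closedBall (0:E) R, ‖iteratedFDeriv ℝ n (u ε) x‖ ≤ C * ε ^ m := by
  obtain ⟨C₁, ε₁, hε₁, h1⟩ := hinv.2 (Metric.closedBall 0 R) (isCompact_closedBall _ _)
    (Set.subset_univ _) n m
  obtain ⟨N, C₂, ε₂, hε₂, h2⟩ := hu.2 (Metric.closedBall 0 R) (isCompact_closedBall _ _)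
    (Set.subset_univ _) n
  refine ⟨2 * max C₁ 0, by positivity, min (min ε₁ ε₂) 1, by positivity, min_le_right _ _, ?_⟩
  intro ε hε hεlt x hx
  have hεlt1 : ε < 1 := lt_of_lt_of_le hεlt (min_le_right _ _)
  have hεlt₁ : ε < ε₁ := lt_of_lt_of_le hεlt ((min_le_left _ _).trans (min_le_left _ _))
  have hεlt₂ : ε < ε₂ := lt_of_lt_of_le hεlt ((min_le_left _ _).trans (min_le_right _ _))
  have hεIoc : ε ∈ Set.Ioc (0:ℝ) 1 := ⟨hε, hεlt1.le⟩
  have hc : ContDiff ℝ (⊤:ℕ∞) (u ε) := contDiffOn_univ.mp (hu.1 ε hεIoc)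
  set g : E → ℝ := fun y => ‖iteratedFDeriv ℝ n (u ε) y‖ with hgdef
  set M : ℝ := max (C₂ * ε ^ (-(N:ℤ))) 0 with hMdef
  have half_mem : ∀ y ∈ Metric.closedBall (0:E) R, (1/2:ℝ) • y ∈ Metric.closedBall (0:E) R := by
    intro y hy
    simp only [Metric.mem_closedBall, dist_zero_right] at hy ⊢
    rw [norm_smul]
    have h0 : (0:ℝ) ≤ ‖y‖ := norm_nonneg _
    have : ‖(1/2:ℝ)‖ = 1/2 := by norm_num
    nlinarith [hy]
  have step : ∀ y ∈ Metric.closedBall (0:E) R,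
      g y ≤ (1/2) * g ((1/2:ℝ) • y) + max C₁ 0 * ε ^ m := by
    intro y hy
    set A : E →L[ℝ] E := (1/2:ℝ) • ContinuousLinearMap.id ℝ E with hAdef
    have hAnorm : ‖A‖ ≤ 1/2 := by
      have ha : ‖A‖ ≤ ‖(1/2:ℝ)‖ * ‖ContinuousLinearMap.id ℝ E‖ := norm_smul_le (1/2:ℝ) (ContinuousLinearMap.id ℝ E)
      have hb : ‖ContinuousLinearMap.id ℝ E‖ ≤ 1 := ContinuousLinearMap.norm_id_le
      have hcc : ‖(1/2:ℝ)‖ = 1/2 := by rw [Real.norm_eq_abs]; norm_num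
      nlinarith [norm_nonneg (ContinuousLinearMap.id ℝ E)]
    have hv : ContDiff ℝ (⊤:ℕ∞) (fun y : E => u ε ((1/2:ℝ) • y)) :=
      hc.comp (contDiff_id.const_smul (1/2:ℝ))
    have hw : ContDiff ℝ (⊤:ℕ∞) (fun y : E => u ε ((1/2:ℝ) • y) - u ε y) := hv.sub hc
    have hdecomp : iteratedFDeriv ℝ n (fun y : E => u ε ((1/2:ℝ) • y)) y =
        iteratedFDeriv ℝ n (fun z : E => u ε ((1/2:ℝ) • z) - u ε z) y
          + iteratedFDeriv ℝ n (u ε) y := by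
      have h := iteratedFDeriv_add_apply' (i := n)
        (f := fun z : E => u ε ((1/2:ℝ) • z) - u ε z) (g := u ε)
        (hw.contDiffAt.of_le (m := n) (by exact_mod_cast le_top)) (hc.contDiffAt.of_le (m := n) (by exact_mod_cast le_top)) (x := y)
      have hfun : (fun z : E => (u ε ((1/2:ℝ) • z) - u ε z) + u ε z)
          = fun z : E => u ε ((1/2:ℝ) • z) := by funext z; ring
      rw [hfun] at h
      exact h
    have hcomp : iteratedFDeriv ℝ n (fun y : E => u ε ((1/2:ℝ) • y)) y =
        (iteratedFDeriv ℝ n (u ε) ((1/2:ℝ) • y)).compContinuousLinearMap (fun _ => A) := by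
      have := A.iteratedFDeriv_comp_right (f := u ε) hc y (i := n) (by exact_mod_cast le_top)
      simpa [Function.comp_def, hAdef] using this
    have hvnorm : ‖iteratedFDeriv ℝ n (fun y : E => u ε ((1/2:ℝ) • y)) y‖
        ≤ (1/2) * g ((1/2:ℝ) • y) := by
      rw [hcomp]
      calc ‖(iteratedFDeriv ℝ n (u ε) ((1/2:ℝ) • y)).compContinuousLinearMap (fun _ => A)‖
          ≤ ‖iteratedFDeriv ℝ n (u ε) ((1/2:ℝ) • y)‖ * ∏ _i : Fin n, ‖A‖ :=
            ContinuousMultilinearMap.norm_compContinuousLinearMap_le _ _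
        _ ≤ g ((1/2:ℝ) • y) * (1/2)^n := by
            refine mul_le_mul_of_nonneg_left ?_ (norm_nonneg _)
            rw [Finset.prod_const]
            simpa using pow_le_pow_left₀ (norm_nonneg A) hAnorm n
        _ ≤ g ((1/2:ℝ) • y) * (1/2) := by
            refine mul_le_mul_of_nonneg_left ?_ (norm_nonneg _)
            calc ((1:ℝ)/2)^n ≤ (1/2)^1 := pow_le_pow_of_le_one (by norm_num) (by norm_num) hn
              _ = 1/2 := pow_one _
        _ = (1/2) * g ((1/2:ℝ) • y) := mul_comm _ _
    have hwnorm : ‖iteratedFDeriv ℝ n (fun z : E => u ε ((1/2:ℝ) • z) - u ε z) y‖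
        ≤ max C₁ 0 * ε ^ m := by
      have h := h1 ε hε hεlt₁ y hy
      rw [iteratedFDerivWithin_univ] at h
      calc ‖iteratedFDeriv ℝ n (fun z : E => u ε ((1/2:ℝ) • z) - u ε z) y‖ ≤ C₁ * ε ^ m := h
        _ ≤ max C₁ 0 * ε ^ m := by
            apply mul_le_mul_of_nonneg_right (le_max_left _ _) (by positivity)
    have hgy : g y ≤ ‖iteratedFDeriv ℝ n (fun y : E => u ε ((1/2:ℝ) • y)) y‖
        + ‖iteratedFDeriv ℝ n (fun z : E => u ε ((1/2:ℝ) • z) - u ε z) y‖ := by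
      have : iteratedFDeriv ℝ n (u ε) y =
          iteratedFDeriv ℝ n (fun y : E => u ε ((1/2:ℝ) • y)) y
            - iteratedFDeriv ℝ n (fun z : E => u ε ((1/2:ℝ) • z) - u ε z) y := by
        rw [hdecomp]; abel
      rw [hgdef]; simp only; rw [this]
      exact norm_sub_le _ _
    linarith
  have claim : ∀ k : ℕ, ∀ y ∈ Metric.closedBall (0:E) R,
      g y ≤ (1/2)^k * M + 2 * (max C₁ 0 * ε ^ m) := by
    intro k
    induction k with
    | zero =>
        intro y hy
        have h := h2 ε hε hεlt₂ y hy
        rw [iteratedFDerivWithin_univ] at h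
        have : g y ≤ M := h.trans (le_max_left _ _)
        have hnn : (0:ℝ) ≤ max C₁ 0 * ε ^ m := by positivity
        simpa using by linarith
    | succ k ih =>
        intro y hy
        have h₁ := step y hy
        have h₂ := ih ((1/2:ℝ) • y) (half_mem y hy)
        have h₃ : (1/2:ℝ) * g ((1/2:ℝ) • y) ≤ (1/2) * ((1/2)^k * M + 2 * (max C₁ 0 * ε ^ m)) :=
          mul_le_mul_of_nonneg_left h₂ (by norm_num)
        calc g y ≤ (1/2) * g ((1/2:ℝ) • y) + max C₁ 0 * ε ^ m := h₁
          _ ≤ (1/2) * ((1/2)^k * M + 2 * (max C₁ 0 * ε ^ m)) + max C₁ 0 * ε ^ m := by linarith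
          _ = (1/2)^(k+1) * M + 2 * (max C₁ 0 * ε ^ m) := by ring
  have hlim : Tendsto (fun k : ℕ => (1/2:ℝ)^k * M + 2 * (max C₁ 0 * ε ^ m)) atTop
      (𝓝 (0 * M + 2 * (max C₁ 0 * ε ^ m))) := by
    exact (((tendsto_pow_atTop_nhds_zero_of_lt_one (by norm_num) (by norm_num)).mul_const M).add
      tendsto_const_nhds)
  have hfinal : g x ≤ 0 * M + 2 * (max C₁ 0 * ε ^ m) :=
    ge_of_tendsto' hlim (fun k => claim k x hx)
  calc ‖iteratedFDeriv ℝ n (u ε) x‖ = g x := rfl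
    _ ≤ 0 * M + 2 * (max C₁ 0 * ε ^ m) := hfinal
    _ = 2 * max C₁ 0 * ε ^ m := by ring

/-- a generalized function on ℝ^d invariant under all standard scalings
is a generalized constant. -/
theorem statement_4
    (d : ℕ) (u : ℝ → EuclideanSpace ℝ (Fin d) → ℂ)
    (hu : IsModerate (Set.univ : Set (EuclideanSpace ℝ (Fin d))) u)
    (hinv : ∀ lam : ℝ, 0 < lam →
      IsNegligible (Set.univ : Set (EuclideanSpace ℝ (Fin d)))
        (fun ε x => u ε (lam • x) - u ε x)) :
    ∃ c : ℝ → ℂ, NumModerate c ∧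
      IsNegligible (Set.univ : Set (EuclideanSpace ℝ (Fin d)))
        (fun ε x => u ε x - c ε) := by
  have hinvh := hinv (1/2) (by norm_num)
  refine ⟨fun ε => u ε 0, ?_, ?_, ?_⟩
  · -- NumModerate
    obtain ⟨N, C, ε₀, hε₀, h⟩ := hu.2 {0} isCompact_singleton (Set.subset_univ _) 0
    refine ⟨N, C, ε₀, hε₀, fun ε hε hε' => ?_⟩
    have := h ε hε hε' 0 rfl
    rwa [iteratedFDerivWithin_univ, norm_iteratedFDeriv_zero] at this
  · -- smoothness
    intro ε hε
    exact (hu.1 ε hε).sub contDiffOn_const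
  · -- estimates
    intro K hK _ n m
    obtain ⟨R₀, hR₀⟩ := hK.isBounded.subset_closedBall 0
    set R : ℝ := max R₀ 0 with hRdef
    have hKR : K ⊆ Metric.closedBall 0 R :=
      hR₀.trans (Metric.closedBall_subset_closedBall (le_max_left _ _))
    have hR0 : (0:ℝ) ≤ R := le_max_right _ _
    rcases Nat.eq_zero_or_pos n with hn | hn
    · -- n = 0 : use mean value with the n = 1 estimate
      obtain ⟨C, hC, ε₀, hε₀, hε₀1, h⟩ := aux_deriv_neg u hu hinvh R 1 le_rfl m
      refine ⟨C * R, ε₀, hε₀, ?_⟩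
      intro ε hε hε' x hx
      have hεIoc : ε ∈ Set.Ioc (0:ℝ) 1 := ⟨hε, (hε'.trans_le hε₀1).le⟩
      have hc : ContDiff ℝ (⊤:ℕ∞) (u ε) := contDiffOn_univ.mp (hu.1 ε hεIoc)
      have hfd : ∀ y ∈ Metric.closedBall (0 : EuclideanSpace ℝ (Fin d)) R,
          ‖fderiv ℝ (u ε) y‖ ≤ C * ε ^ m := by
        intro y hy
        have h1 := h ε hε hε' y hy
        refine ContinuousLinearMap.opNorm_le_bound _ (by positivity) fun v => ?_
        have heq : fderiv ℝ (u ε) y v = iteratedFDeriv ℝ 1 (u ε) y (fun _ => v) := by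
          rw [iteratedFDeriv_one_apply]
        rw [heq]
        calc ‖iteratedFDeriv ℝ 1 (u ε) y (fun _ => v)‖
            ≤ ‖iteratedFDeriv ℝ 1 (u ε) y‖ * ∏ _i : Fin 1, ‖v‖ :=
              (iteratedFDeriv ℝ 1 (u ε) y).le_opNorm _
          _ = ‖iteratedFDeriv ℝ 1 (u ε) y‖ * ‖v‖ := by simp
          _ ≤ (C * ε ^ m) * ‖v‖ := mul_le_mul_of_nonneg_right h1 (norm_nonneg v)
      have hmv := Convex.norm_image_sub_le_of_norm_fderiv_le
        (fun y _ => (hc.differentiable (by simp)).differentiableAt)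
        hfd (convex_closedBall _ _) (Metric.mem_closedBall_self hR0) (hKR hx)
      subst hn
      rw [iteratedFDerivWithin_univ, norm_iteratedFDeriv_zero]
      calc ‖u ε x - u ε 0‖ ≤ (C * ε ^ m) * ‖x - 0‖ := hmv
        _ ≤ (C * ε ^ m) * R := by
            refine mul_le_mul_of_nonneg_left ?_ (by positivity)
            simpa using Metric.mem_closedBall.mp (hKR hx)
        _ = (C * R) * ε ^ m := by ring
    · -- n ≥ 1
      obtain ⟨C, hC, ε₀, hε₀, hε₀1, h⟩ := aux_deriv_neg u hu hinvh R n hn m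
      refine ⟨C, ε₀, hε₀, ?_⟩
      intro ε hε hε' x hx
      have hεIoc : ε ∈ Set.Ioc (0:ℝ) 1 := ⟨hε, (hε'.trans_le hε₀1).le⟩
      have hc : ContDiff ℝ (⊤:ℕ∞) (u ε) := contDiffOn_univ.mp (hu.1 ε hεIoc)
      rw [iteratedFDerivWithin_univ]
      have heq : iteratedFDeriv ℝ n (fun x => u ε x - u ε 0) x
          = iteratedFDeriv ℝ n (u ε) x := by
        have hfun : (fun x : EuclideanSpace ℝ (Fin d) => u ε x - u ε 0)
            = fun x => u ε x + (fun _ : EuclideanSpace ℝ (Fin d) => -(u ε 0)) x := by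
          funext z; simp [sub_eq_add_neg]
        rw [hfun, iteratedFDeriv_add_apply' (x := x) (hc.contDiffAt.of_le (m := n) (by exact_mod_cast le_top))
          contDiffAt_const, iteratedFDeriv_const_of_ne (Nat.pos_iff_ne_zero.mp hn)]
        simp
      rw [heq]
      exact h ε hε hε' x (hKR hx)
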